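/- The central extension 1 → ℤ → π₁(Kb) → D_∞ → 1, where ℤ is the center of the Klein bottle group, does not split: there is no subgroup of π₁(Kb) mapping isomorphically onto D_∞. -/

import Mathlib

/-- Relations for the Klein bottle group ⟨d, y ∣ d y d⁻¹ = y⁻¹⟩. -/
def kleinRels : Set (FreeGroup Bool) :=
  {FreeGroup.of true * FreeGroup.of false * (FreeGroup.of true)⁻¹ * FreeGroup.of false}

abbrev KleinGroup : Type := PresentedGroup kleinRels

open QuaternionGroup

/-- Map the Klein bottle group generators into the quaternion group `Q₈`. -/
def kleinToQ8fun : Bool → QuaternionGroup 2 := fun b => if b then xa 0 else a 1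

lemma kleinToQ8_rels : ∀ r ∈ kleinRels, FreeGroup.lift kleinToQ8fun r = 1 := by
  intro r hr
  rw [kleinRels, Set.mem_singleton_iff] at hr
  subst hr
  simp only [map_mul, map_inv, FreeGroup.lift_apply_of, kleinToQ8fun, if_true, if_false]
  decide

/-- The induced homomorphism π₁(Kb) → Q₈. -/
def kleinToQ8 : KleinGroup →* QuaternionGroup 2 :=
  PresentedGroup.toGroup kleinToQ8_rels

lemma q8_key : ∀ q : QuaternionGroup 2, q * xa 0 = xa 0 * q → q * a 1 = a 1 * q →
    (xa 0 * q) * (xa 0 * q) ≠ 1 := by decide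

/-- The central extension 1 → ℤ → π₁(Kb) → D_∞ → 1, where ℤ = ζπ₁(Kb) is the
centre, does not split: no subgroup of π₁(Kb) is carried isomorphically onto
the quotient π₁(Kb)/ζπ₁(Kb) ≅ D_∞ by the quotient map. -/
theorem klein_central_extension_not_split :
    ¬ ∃ H : Subgroup KleinGroup,
      Function.Bijective
        (fun h : H => QuotientGroup.mk' (Subgroup.center KleinGroup) (h : KleinGroup)) := by
  rintro ⟨H, hinj, hsurj⟩
  set d : KleinGroup := PresentedGroup.of true with hd
  set y : KleinGroup := PresentedGroup.of false with hy
  -- the defining relation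
  have hrel : d * y * d⁻¹ * y = 1 := by
    have : PresentedGroup.mk kleinRels
        (FreeGroup.of true * FreeGroup.of false * (FreeGroup.of true)⁻¹ * FreeGroup.of false)
        = 1 := by
      apply (QuotientGroup.eq_one_iff _).mpr
      exact Subgroup.subset_normalClosure rfl
    simp only [map_mul, map_inv] at this; exact this
  have hconj : d * y * d⁻¹ = y⁻¹ := mul_eq_one_iff_eq_inv.mp hrel
  have h1 : d * y = y⁻¹ * d := by rw [← hconj]; group
  have h2 : y * d = d * y⁻¹ := by
    have := congrArg (fun t => y * t * y⁻¹) h1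
    simpa [mul_assoc] using this
  have hcomm : (d * d) * y = y * (d * d) := by
    calc (d * d) * y = d * (d * y) := by rw [mul_assoc]
      _ = d * (y⁻¹ * d) := by rw [h1]
      _ = (d * y⁻¹) * d := by rw [mul_assoc]
      _ = (y * d) * d := by rw [h2]
      _ = y * (d * d) := by rw [mul_assoc]
  -- d² is central
  have hd2 : d * d ∈ Subgroup.center KleinGroup := by
    rw [Subgroup.mem_center_iff]
    intro g
    have hg : g ∈ Subgroup.centralizer {d * d} := by
      refine PresentedGroup.generated_by kleinRels _ (fun j => ?_) g
      rw [Subgroup.mem_centralizer_iff]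
      intro u hu
      rw [Set.mem_singleton_iff] at hu
      subst hu
      cases j with
      | true => rw [← hd, mul_assoc]
      | false => rw [← hy]; exact hcomm
    exact ((Subgroup.mem_centralizer_iff.mp hg) (d * d) rfl).symm
  -- lift φ(d) to H
  obtain ⟨⟨h, hH⟩, hh⟩ := hsurj (QuotientGroup.mk' (Subgroup.center KleinGroup) d)
  simp only at hh
  have hz : d⁻¹ * h ∈ Subgroup.center KleinGroup := by
    rw [← QuotientGroup.ker_mk' (Subgroup.center KleinGroup), MonoidHom.mem_ker, map_mul,
      map_inv, hh, inv_mul_cancel]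
  set z := d⁻¹ * h with hzdef
  have hhdz : h = d * z := by rw [hzdef, ← mul_assoc, mul_inv_cancel, one_mul]
  -- h² = 1 by injectivity
  have e1 : QuotientGroup.mk' (Subgroup.center KleinGroup) (h * h) = 1 := by
    rw [map_mul, hh, ← map_mul]
    exact (QuotientGroup.eq_one_iff _).mpr hd2
  have e2 : (⟨h * h, H.mul_mem hH hH⟩ : H) = ⟨1, H.one_mem⟩ := by
    apply hinj
    simpa using e1
  have hhh : h * h = 1 := congrArg Subtype.val e2
  -- contradiction in Q₈
  have hψd : kleinToQ8 d = xa 0 := PresentedGroup.toGroup.of kleinToQ8_rels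
  have hψy : kleinToQ8 y = a 1 := PresentedGroup.toGroup.of kleinToQ8_rels
  have c1 : kleinToQ8 z * xa 0 = xa 0 * kleinToQ8 z := by
    rw [← hψd, ← map_mul, ← map_mul, ← Subgroup.mem_center_iff.mp hz d]
  have c2 : kleinToQ8 z * a 1 = a 1 * kleinToQ8 z := by
    rw [← hψy, ← map_mul, ← map_mul, ← Subgroup.mem_center_iff.mp hz y]
  have hone : (xa 0 * kleinToQ8 z) * (xa 0 * kleinToQ8 z) = 1 := by
    rw [← hψd, ← map_mul, ← map_mul, ← hhdz, hhh, map_one]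
  exact q8_key (kleinToQ8 z) c1 c2 hone
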